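/- For all x ≥ 1, the function Φ(x) = 2·log(x+2) + 2(x+1)·log((x+2)/(x+1)) − log(7x² + 21x + 16) is positive; equivalently (x+2)^{2x+4}/(x+1)^{2x+2} > 7x² + 21x + 16. -/

import Mathlib

set_option maxHeartbeats 1000000

theorem stmt6 : ∀ x : ℝ, 1 ≤ x →
    0 < 2 * Real.log (x+2) + 2*(x+1) * Real.log ((x+2)/(x+1)) - Real.log (7*x^2 + 21*x + 16) ∧
    7*x^2 + 21*x + 16 < (x+2) ^ (2*x+4) / (x+1) ^ (2*x+2) := by
  intro x hx
  have ha : (0:ℝ) < x + 1 := by linarith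
  have hb : (0:ℝ) < x + 2 := by linarith
  have hq : (0:ℝ) < 7*x^2 + 21*x + 16 := by nlinarith
  obtain ⟨u, hu_def⟩ : ∃ u : ℝ, u = 1/(x+2) := ⟨_, rfl⟩
  have hu0 : 0 < u := by rw [hu_def]; positivity
  have hu3 : u ≤ 1/3 := by
    rw [hu_def, div_le_div_iff₀ hb (by norm_num)]; linarith
  have habs : |u| < 1 := by rw [abs_of_pos hu0]; linarith
  have h1u : 1 - u = (x+1)/(x+2) := by
    rw [hu_def]; field_simp; ring
  have h1upos : 0 < 1 - u := by rw [h1u]; positivity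
  -- Taylor series lower bound for log((x+2)/(x+1)) = -log(1-u)
  have hlog5 := Real.abs_log_sub_add_sum_range_le habs 5
  have hsum : (∑ i ∈ Finset.range 5, u^(i+1)/((i:ℝ)+1))
      = u + u^2/2 + u^3/3 + u^4/4 + u^5/5 := by
    simp [Finset.sum_range_succ]
    ring
  rw [abs_of_pos hu0] at hlog5
  rw [hsum] at hlog5
  have hlogl : -(Real.log (1-u)) ≥ u + u^2/2 + u^3/3 + u^4/4 + u^5/5 - u^6/(1-u) := by
    have h := (abs_le.mp hlog5).2
    have : u^(5+1) = u^6 := by norm_num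
    rw [this] at h
    linarith
  have hinv : (x+2)/(x+1) = (1-u)⁻¹ := by
    rw [h1u, inv_div]
  have hlogq : Real.log ((x+2)/(x+1)) = -(Real.log (1-u)) := by
    rw [hinv, Real.log_inv]
  obtain ⟨s, hs_def⟩ : ∃ s : ℝ, s = u + u^2/3 + u^3/6 + u^4/10 + 12*u^5/5 := ⟨_, rfl⟩
  have hs0 : 0 ≤ s := by rw [hs_def]; positivity
  have hs1 : s ≤ 1 := by
    rw [hs_def]
    nlinarith [pow_le_pow_left₀ hu0.le hu3 2, pow_le_pow_left₀ hu0.le hu3 3,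
      pow_le_pow_left₀ hu0.le hu3 4, pow_le_pow_left₀ hu0.le hu3 5]
  -- identity: 2(x+1)(Taylor sum - error) = 2 - s
  have hiden : 2*(x+1)*(u + u^2/2 + u^3/3 + u^4/4 + u^5/5 - u^6/(1-u)) = 2 - s := by
    rw [hs_def, hu_def, show (1:ℝ) - 1/(x+2) = (x+1)/(x+2) by field_simp; ring]
    field_simp
    ring
  have hL : 2*(x+1) * Real.log ((x+2)/(x+1)) ≥ 2 - s := by
    rw [hlogq, ← hiden]
    have h2a : (0:ℝ) ≤ 2*(x+1) := by linarith
    exact mul_le_mul_of_nonneg_left hlogl h2a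
  -- exp bounds
  have he2 : (7389/1000 : ℝ) < Real.exp 2 := by
    have h1 := Real.exp_one_gt_d9
    have h2 : Real.exp 2 = Real.exp 1 * Real.exp 1 := by
      rw [← Real.exp_add]; norm_num
    nlinarith
  have hexp_s : Real.exp s ≤ 1 + s + s^2/2 + s^3/6 + 5*s^4/96 := by
    have h := Real.exp_bound' hs0 hs1 (n := 4) (by norm_num)
    have hsum4 : (∑ m ∈ Finset.range 4, s^m/(m.factorial : ℝ))
        = 1 + s + s^2/2 + s^3/6 := by
      simp [Finset.sum_range_succ, Nat.factorial]
    rw [hsum4] at h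
    norm_num [Nat.factorial] at h
    linarith
  have hexp_le : Real.exp s * (2 - s) ≤ 2 + s := by
    have hmul1 : Real.exp s * (2-s) ≤ (1 + s + s^2/2 + s^3/6 + 5*s^4/96) * (2-s) :=
      mul_le_mul_of_nonneg_right hexp_s (by linarith)
    have hpoly : (1 + s + s^2/2 + s^3/6 + 5*s^4/96) * (2-s) ≤ 2 + s := by
      nlinarith [pow_nonneg hs0 3, pow_nonneg hs0 4, pow_nonneg hs0 5]
    linarith
  -- key polynomial inequality
  have hs5 : s * (x+2)^5 = (x+2)^4 + (x+2)^3/3 + (x+2)^2/6 + (x+2)/10 + 12/5 := by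
    rw [hs_def, hu_def]
    field_simp
  have hkey : (7*x^2 + 21*x + 16) * (2 + s) < 7389/1000 * ((x+2)^2 * (2 - s)) := by
    have h5 : (0:ℝ) < (x+2)^5 := by positivity
    rw [← mul_lt_mul_iff_of_pos_right h5]
    have hq5 : (7*x^2 + 21*x + 16) * (s*(x+2)^5)
        = (7*x^2 + 21*x + 16) * ((x+2)^4 + (x+2)^3/3 + (x+2)^2/6 + (x+2)/10 + 12/5) := by
      rw [hs5]
    have hc5 : (x+2)^2 * (s*(x+2)^5)
        = (x+2)^2 * ((x+2)^4 + (x+2)^3/3 + (x+2)^2/6 + (x+2)/10 + 12/5) := by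
      rw [hs5]
    nlinarith [hq5, hc5, pow_nonneg (sub_nonneg.2 hx) 2, pow_nonneg (sub_nonneg.2 hx) 3,
      pow_nonneg (sub_nonneg.2 hx) 4, pow_nonneg (sub_nonneg.2 hx) 5,
      pow_nonneg (sub_nonneg.2 hx) 6, pow_nonneg (sub_nonneg.2 hx) 7,
      sub_nonneg.2 hx]
  -- q < (x+2)^2 * exp(2 - s)
  have hmul : Real.exp (2-s) * Real.exp s = Real.exp 2 := by
    rw [← Real.exp_add]; ring_nf
  have h2s : 0 < 2 - s := by linarith
  have h2ps : 0 < 2 + s := by linarith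
  have hlow : 7389/1000 * (2 - s) ≤ Real.exp (2-s) * (2 + s) := by
    have step1 : (7389/1000 : ℝ) * (2-s) ≤ Real.exp 2 * (2-s) :=
      mul_le_mul_of_nonneg_right he2.le h2s.le
    have step2 : Real.exp 2 * (2-s) = Real.exp (2-s) * (Real.exp s * (2-s)) := by
      rw [← mul_assoc, hmul]
    have step3 : Real.exp (2-s) * (Real.exp s * (2-s)) ≤ Real.exp (2-s) * (2+s) :=
      mul_le_mul_of_nonneg_left hexp_le (Real.exp_pos _).le
    linarith [step1, step2 ▸ step3]
  have hq_lt : 7*x^2 + 21*x + 16 < (x+2)^2 * Real.exp (2-s) := by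
    have hsq : (0:ℝ) ≤ (x+2)^2 := sq_nonneg _
    have h1 : (x+2)^2 * (7389/1000 * (2-s)) ≤ (x+2)^2 * (Real.exp (2-s) * (2+s)) :=
      mul_le_mul_of_nonneg_left hlow hsq
    nlinarith [hkey, h1, h2ps]
  -- take logs
  have hlog_lt : Real.log (7*x^2 + 21*x + 16) < 2 * Real.log (x+2) + (2 - s) := by
    have h := Real.log_lt_log hq hq_lt
    have hrhs : Real.log ((x+2)^2 * Real.exp (2-s)) = 2 * Real.log (x+2) + (2-s) := by
      rw [Real.log_mul (by positivity) (Real.exp_ne_zero _), Real.log_exp, Real.log_pow]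
      norm_num
    rwa [hrhs] at h
  have hPhi : 0 < 2 * Real.log (x+2) + 2*(x+1) * Real.log ((x+2)/(x+1))
      - Real.log (7*x^2 + 21*x + 16) := by linarith
  refine ⟨hPhi, ?_⟩
  -- second conjunct via exponentiation
  have hApos : (0:ℝ) < (x+2) ^ (2*x+4) / (x+1) ^ (2*x+2) := by
    apply div_pos (Real.rpow_pos_of_pos hb _) (Real.rpow_pos_of_pos ha _)
  have hlogA : Real.log ((x+2) ^ (2*x+4) / (x+1) ^ (2*x+2))
      = (2*x+4) * Real.log (x+2) - (2*x+2) * Real.log (x+1) := by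
    rw [Real.log_div (Real.rpow_pos_of_pos hb _).ne' (Real.rpow_pos_of_pos ha _).ne',
      Real.log_rpow hb, Real.log_rpow ha]
  have hlogquot : Real.log ((x+2)/(x+1)) = Real.log (x+2) - Real.log (x+1) :=
    Real.log_div hb.ne' ha.ne'
  have hlt : Real.log (7*x^2 + 21*x + 16) < Real.log ((x+2) ^ (2*x+4) / (x+1) ^ (2*x+2)) := by
    rw [hlogA]
    rw [hlogquot] at hPhi
    nlinarith [hPhi]
  calc 7*x^2 + 21*x + 16 = Real.exp (Real.log (7*x^2 + 21*x + 16)) := (Real.exp_log hq).symm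
    _ < Real.exp (Real.log ((x+2) ^ (2*x+4) / (x+1) ^ (2*x+2))) := Real.exp_lt_exp.mpr hlt
    _ = (x+2) ^ (2*x+4) / (x+1) ^ (2*x+2) := Real.exp_log hApos
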